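/- Let v ≥ 0, λ ≥ 0, α ∈ (0,1) and let d ≥ 1 be an integer. Then for all z₁, z₂ ∈ ℝ^d: | min(v|z₁|, λ|z₁|^α) − min(v|z₂|, λ|z₂|^α) | ≤ min(v|z₁−z₂|, λ|z₁−z₂|^α). (Inequality (56) in the proof of Lemma 6.2.) -/

import Mathlib

open Set

/-- **Inequality (56) in the proof of Lemma 6.2.** For `v, λ ≥ 0`, `α ∈ (0,1)` and
`z₁, z₂ ∈ ℝ^d`:
`|min(v|z₁|, λ|z₁|^α) - min(v|z₂|, λ|z₂|^α)| ≤ min(v|z₁-z₂|, λ|z₁-z₂|^α)`. -/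
theorem inequality_56
    (d : ℕ) (hd : 1 ≤ d)
    (v lam α : ℝ) (hv : 0 ≤ v) (hlam : 0 ≤ lam) (hα : α ∈ Ioo (0 : ℝ) 1)
    (z₁ z₂ : EuclideanSpace ℝ (Fin d)) :
    |min (v * ‖z₁‖) (lam * ‖z₁‖ ^ α) - min (v * ‖z₂‖) (lam * ‖z₂‖ ^ α)|
      ≤ min (v * ‖z₁ - z₂‖) (lam * ‖z₁ - z₂‖ ^ α) := by
  obtain ⟨hα0, hα1⟩ := hα
  set f : ℝ → ℝ := fun t => min (v * t) (lam * t ^ α) with hfdef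
  have hscale : ∀ s x : ℝ, 0 ≤ s → s ≤ 1 → 0 ≤ x → s * f x ≤ f (s * x) := by
    intro s x hs hs1 hx
    rcases eq_or_lt_of_le hs with h0 | h0
    · simp [f, ← h0, Real.zero_rpow (ne_of_gt hα0)]
    · have h1 : (s * x) ^ α = s ^ α * x ^ α := Real.mul_rpow hs hx
      have h2 : s ≤ s ^ α := by
        calc s = s ^ (1:ℝ) := (Real.rpow_one s).symm
        _ ≤ s ^ α := Real.rpow_le_rpow_of_exponent_ge h0 hs1 hα1.le
      have e1 : s * f x = min (s * (v * x)) (s * (lam * x ^ α)) := by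
        simp [f, mul_min_of_nonneg _ _ hs]
      rw [e1]
      apply min_le_min
      · ring_nf; exact le_refl _
      · rw [h1]
        calc s * (lam * x ^ α) = lam * (s * x ^ α) := by ring
        _ ≤ lam * (s ^ α * x ^ α) := by
            apply mul_le_mul_of_nonneg_left _ hlam
            exact mul_le_mul_of_nonneg_right h2 (Real.rpow_nonneg hx α)
  have hf0 : f 0 = 0 := by
    simp [f, Real.zero_rpow (ne_of_gt hα0)]
  have hsub : ∀ b c : ℝ, 0 ≤ b → 0 ≤ c → f (b + c) ≤ f b + f c := by
    intro b c hb hc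
    rcases eq_or_lt_of_le (add_nonneg hb hc) with h0 | h0
    · have hb0 : b = 0 := by linarith [(add_eq_zero_iff_of_nonneg hb hc).mp h0.symm]
      have hc0 : c = 0 := by linarith
      simp [hb0, hc0, hf0]
    · have h1 : (b / (b + c)) * f (b + c) ≤ f b := by
        have := hscale (b / (b + c)) (b + c) (div_nonneg hb h0.le)
          (by rw [div_le_one h0]; linarith) h0.le
        rwa [div_mul_cancel₀ _ (ne_of_gt h0)] at this
      have h2 : (c / (b + c)) * f (b + c) ≤ f c := by
        have := hscale (c / (b + c)) (b + c) (div_nonneg hc h0.le)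
          (by rw [div_le_one h0]; linarith) h0.le
        rwa [div_mul_cancel₀ _ (ne_of_gt h0)] at this
      have h3 : (b / (b + c)) * f (b + c) + (c / (b + c)) * f (b + c) = f (b + c) := by
        rw [← add_mul, ← add_div, div_self (ne_of_gt h0), one_mul]
      linarith
  have hmono : ∀ a b : ℝ, 0 ≤ a → a ≤ b → f a ≤ f b := by
    intro a b ha hab
    apply min_le_min
    · exact mul_le_mul_of_nonneg_left hab hv
    · exact mul_le_mul_of_nonneg_left (Real.rpow_le_rpow ha hab hα0.le) hlam
  have key : ∀ a b c : ℝ, 0 ≤ a → 0 ≤ b → 0 ≤ c → a ≤ b + c → f a - f b ≤ f c := by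
    intro a b c ha hb hc habc
    have := (hmono a (b + c) ha habc).trans (hsub b c hb hc)
    linarith
  rw [abs_sub_le_iff]
  constructor
  · exact key ‖z₁‖ ‖z₂‖ ‖z₁ - z₂‖ (norm_nonneg _) (norm_nonneg _) (norm_nonneg _)
      (by simpa using norm_add_le z₂ (z₁ - z₂))
  · refine key ‖z₂‖ ‖z₁‖ ‖z₁ - z₂‖ (norm_nonneg _) (norm_nonneg _) (norm_nonneg _) ?_
    have : ‖z₂ - z₁‖ = ‖z₁ - z₂‖ := norm_sub_rev _ _
    calc ‖z₂‖ = ‖z₁ + (z₂ - z₁)‖ := by rw [show z₁ + (z₂ - z₁) = z₂ by abel]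
    _ ≤ ‖z₁‖ + ‖z₂ - z₁‖ := norm_add_le _ _
    _ = ‖z₁‖ + ‖z₁ - z₂‖ := by rw [this]
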